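/- Let k > 0 be a constant and let θ̃ : ℝ≥0 → ℝ satisfy d/dt sin²(θ̃(t)/2) = −2k·cos²(θ̃(t)/2)·sin²(θ̃(t)/2). If sin²(θ̃(0)/2) < 1, then sin²(θ̃(t)/2) → 0 as t → ∞; moreover sin²(θ̃(t)/2) ≤ sin²(θ̃(0)/2)·e^{−2k·cos²(θ̃(0)/2)·t} for all t ≥ 0. -/

import Mathlib

open Real Filter

theorem stmt10 (k : ℝ) (hk : 0 < k) (θ : ℝ → ℝ)
    (hode : ∀ t ≥ (0:ℝ), HasDerivAt (fun s => Real.sin (θ s / 2) ^ 2)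
      (-2 * k * Real.cos (θ t / 2) ^ 2 * Real.sin (θ t / 2) ^ 2) t)
    (h0 : Real.sin (θ 0 / 2) ^ 2 < 1) :
    Tendsto (fun t => Real.sin (θ t / 2) ^ 2) atTop (nhds 0)
    ∧ ∀ t ≥ (0:ℝ), Real.sin (θ t / 2) ^ 2
        ≤ Real.sin (θ 0 / 2) ^ 2 * Real.exp (-2 * k * Real.cos (θ 0 / 2) ^ 2 * t) := by
  set y : ℝ → ℝ := fun s => Real.sin (θ s / 2) ^ 2 with hy
  have hy0 : ∀ t, 0 ≤ y t := fun t => sq_nonneg _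
  have hy1 : ∀ t, y t ≤ 1 := fun t => by
    simpa [hy] using Real.sin_sq_le_one (θ t / 2)
  have hcos : ∀ t, Real.cos (θ t / 2) ^ 2 = 1 - y t := fun t => Real.cos_sq' _
  set c : ℝ := 1 - y 0 with hc
  have h0' : y 0 < 1 := h0
  have hcpos : 0 < c := by simp [hc]; linarith
  -- y is antitone on Ici 0
  have hder : ∀ t ∈ Set.Ici (0:ℝ),
      HasDerivAt y (-2 * k * (1 - y t) * y t) t := by
    intro t ht
    have := hode t ht
    rw [hcos t] at this
    exact this
  have hcont : ContinuousOn y (Set.Ici 0) := fun t ht =>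
    (hder t ht).continuousAt.continuousWithinAt
  have hanti : AntitoneOn y (Set.Ici 0) := by
    apply antitoneOn_of_deriv_nonpos (convex_Ici 0) hcont
    · intro t ht
      rw [interior_Ici] at ht
      exact (hder t (Set.mem_Ici.mpr (le_of_lt ht))).differentiableAt.differentiableWithinAt
    · intro t ht
      rw [interior_Ici] at ht
      rw [(hder t (Set.mem_Ici.mpr (le_of_lt ht))).deriv]
      have h2 := hy0 t; have h3 := hy1 t
      nlinarith [mul_nonneg (mul_nonneg hk.le h2) (sub_nonneg.mpr h3)]
  have hyle : ∀ t ≥ (0:ℝ), y t ≤ y 0 :=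
    fun t ht => hanti (Set.self_mem_Ici) ht ht
  -- g = y * exp(2kc t) is antitone on Ici 0
  set g : ℝ → ℝ := fun t => y t * Real.exp (2 * k * c * t) with hg
  have hgder : ∀ t ∈ Set.Ici (0:ℝ), HasDerivAt g
      (-2 * k * (1 - y t) * y t * Real.exp (2 * k * c * t)
        + y t * (2 * k * c * Real.exp (2 * k * c * t))) t := by
    intro t ht
    have he : HasDerivAt (fun s => Real.exp (2 * k * c * s))
        (2 * k * c * Real.exp (2 * k * c * t)) t := by
      have := ((hasDerivAt_id t).const_mul (2 * k * c)).exp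
      simpa [mul_comm] using this
    exact (hder t ht).mul he
  have hganti : AntitoneOn g (Set.Ici 0) := by
    apply antitoneOn_of_deriv_nonpos (convex_Ici 0)
    · exact fun t ht => ((hgder t ht).continuousAt).continuousWithinAt
    · intro t ht
      rw [interior_Ici] at ht
      exact (hgder t (Set.mem_Ici.mpr (le_of_lt ht))).differentiableAt.differentiableWithinAt
    · intro t ht
      rw [interior_Ici] at ht
      rw [(hgder t (Set.mem_Ici.mpr (le_of_lt ht))).deriv]
      have h1 := hyle t (le_of_lt ht)
      have h2 := hy0 t
      have h3 : (0:ℝ) < Real.exp (2 * k * c * t) := Real.exp_pos _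
      have key : -2 * k * (1 - y t) * y t + y t * (2 * k * c) ≤ 0 := by
        have hcle : c ≤ 1 - y t := by simp [hc]; linarith
        nlinarith [mul_nonneg (mul_nonneg hk.le h2) (sub_nonneg.mpr hcle)]
      nlinarith
  have hbound : ∀ t ≥ (0:ℝ), y t ≤ y 0 * Real.exp (-(2 * k * c) * t) := by
    intro t ht
    have := hganti Set.self_mem_Ici ht ht
    have hg0 : g 0 = y 0 := by simp [hg]
    rw [hg0] at this
    have hyt : y t = g t * Real.exp (-(2 * k * c) * t) := by
      simp [hg, mul_assoc, ← Real.exp_add]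
    rw [hyt]
    exact mul_le_mul_of_nonneg_right this (le_of_lt (Real.exp_pos _))
  have hc0 : Real.cos (θ 0 / 2) ^ 2 = c := by rw [hcos 0]
  constructor
  · apply squeeze_zero' (Eventually.of_forall hy0)
      ((eventually_ge_atTop (0:ℝ)).mono hbound)
    have hlin : Tendsto (fun t : ℝ => -(2 * k * c) * t) atTop atBot := by
      apply Tendsto.const_mul_atTop_of_neg _ tendsto_id
      nlinarith
    have := (Real.tendsto_exp_atBot.comp hlin).const_mul (y 0)
    simpa using this
  · intro t ht
    have := hbound t ht
    rw [hc0]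
    calc y t ≤ y 0 * Real.exp (-(2 * k * c) * t) := this
      _ = y 0 * Real.exp (-2 * k * c * t) := by ring_nf
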